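/- Let μ > 0, λ0 ∈ ℝ, α ≥ 0, A ∈ ℝ, C ≠ 0, ε ∈ (0,1), and let φ_w : ℝ → ℝ be continuous with φ_w(1−t) = A t^α + o(t^α) as t ↓ 0. With λ = 2 and a_h = h^{−λ(1+α)−λ0+1} exp(−1/(μ h^λ)), one has a_h · (1/(πC)) h^{λ0−1} ∫_ε^1 φ_w(s) s^{−λ0} exp(s^λ/(μ h^λ)) ds → (A/(πC)) (μ/λ)^{1+α} Γ(α+1) as h ↓ 0. -/

import Mathlib

open Real Filter

section Aux

open MeasureTheory Set

lemma aux_integral (α : ℝ) (hα : 0 ≤ α) (c : ℝ) (hc : 0 < c) :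
    ∫ u in Set.Ioi (0:ℝ), u ^ α * Real.exp (-(c * u)) = (1/c) ^ (α+1) * Real.Gamma (α+1) := by
  rw [← Real.integral_rpow_mul_exp_neg_mul_Ioi (by linarith : (0:ℝ) < α+1) hc]
  exact setIntegral_congr_fun measurableSet_Ioi fun u hu => by rw [add_sub_cancel_right]

lemma aux_integrable (α c : ℝ) (hα : 0 ≤ α) (hc : 0 < c) :
    MeasureTheory.IntegrableOn (fun u : ℝ => u ^ α * Real.exp (-(c*u))) (Set.Ioi 0) := by
  have h := integrableOn_rpow_mul_exp_neg_mul_rpow (s:=α) (p:=1) (b:=c) (by linarith) zero_lt_one hc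
  exact h.congr_fun (fun u hu => by beta_reduce; rw [Real.rpow_one, neg_mul]) measurableSet_Ioi

lemma aux_core (α A b : ℝ) (hα : 0 ≤ α) (hb : 0 < b) (hb2 : b < 2) (g : ℝ → ℝ)
    (hgm : Measurable g) (hgc : ContinuousOn g (Set.Icc 0 b))
    (hg : (fun t => g t - A * t ^ α) =o[nhdsWithin 0 (Set.Ioi 0)] fun t => t ^ α) :
    Filter.Tendsto
      (fun x : ℝ => ∫ u in Set.Ioi (0:ℝ),
        (Set.Ioc 0 (b*x)).indicator (fun u => x ^ α * g (u/x) * Real.exp (u^2/x - 2*u)) u)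
      atTop (nhds (A * ((1/(2:ℝ)) ^ (α+1) * Real.Gamma (α+1)))) := by
  -- the limit of g t / t^α
  have hr : Tendsto (fun t : ℝ => g t / t ^ α) (nhdsWithin 0 (Set.Ioi 0)) (nhds A) := by
    have h0 := hg.tendsto_div_nhds_zero
    have h1 : Tendsto (fun t : ℝ => (g t - A * t ^ α) / t ^ α + A)
        (nhdsWithin 0 (Set.Ioi 0)) (nhds (0 + A)) := h0.add_const A
    rw [zero_add] at h1
    refine Tendsto.congr' ?_ h1
    filter_upwards [self_mem_nhdsWithin] with t ht
    have htα : (t:ℝ)^α ≠ 0 := (Real.rpow_pos_of_pos ht α).ne'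
    field_simp
    ring
  -- choice of δ
  obtain ⟨δ₀, hδ₀, hδ⟩ : ∃ δ₀ > 0, ∀ t : ℝ, dist t 0 < δ₀ → t ∈ Set.Ioi (0:ℝ) →
      ‖g t - A * t ^ α‖ ≤ 1 * ‖t ^ α‖ := by
    have h := hg.def one_pos
    rw [eventually_nhdsWithin_iff, Metric.eventually_nhds_iff] at h
    obtain ⟨δ₀, hδ₀, h⟩ := h
    exact ⟨δ₀, hδ₀, fun t h1 h2 => h h1 h2⟩
  set δ : ℝ := min (δ₀/2) b with hδdef
  have hδpos : 0 < δ := lt_min (by linarith) hb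
  have hδb : δ ≤ b := min_le_right _ _
  have hgsmall : ∀ t : ℝ, 0 < t → t ≤ δ → |g t| ≤ (|A| + 1) * t ^ α := by
    intro t ht htδ
    have h1 : dist t 0 < δ₀ := by
      rw [Real.dist_eq, sub_zero, abs_of_pos ht]
      have := min_le_left (δ₀/2) b
      linarith [htδ.trans this]
    have h2 := hδ t h1 ht
    have htα : (0:ℝ) < t ^ α := Real.rpow_pos_of_pos ht α
    rw [Real.norm_eq_abs, Real.norm_eq_abs, one_mul, abs_of_pos htα] at h2
    calc |g t| ≤ |g t - A * t ^ α| + |A * t ^ α| := by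
          have := abs_add_le (g t - A * t ^ α) (A * t ^ α); simpa using this
      _ ≤ t ^ α + |A| * t ^ α := by
          rw [abs_mul, abs_of_pos htα]; linarith
      _ = (|A| + 1) * t ^ α := by ring
  -- bound K on [0,b]
  obtain ⟨K, hK⟩ : ∃ K, ∀ t ∈ Set.Icc (0:ℝ) b, |g t| ≤ K := by
    obtain ⟨K, hK⟩ := isCompact_Icc.exists_bound_of_continuousOn hgc
    exact ⟨K, fun t ht => by simpa using hK t ht⟩
  have hK0 : 0 ≤ K := (abs_nonneg _).trans (hK 0 ⟨le_refl 0, hb.le⟩)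
  set M : ℝ := (|A| + 1) + K / δ ^ α with hMdef
  have hδα : (0:ℝ) < δ ^ α := Real.rpow_pos_of_pos hδpos α
  have hM0 : 0 ≤ M := by positivity
  set bound : ℝ → ℝ := fun u => M * (u ^ α * Real.exp (-((2-b) * u))) with hbound
  have hbound_int : Integrable bound (volume.restrict (Set.Ioi 0)) :=
    (aux_integrable α (2-b) hα (by linarith)).const_mul M
  have key := MeasureTheory.tendsto_integral_filter_of_dominated_convergence
    (μ := volume.restrict (Set.Ioi (0:ℝ))) (l := atTop)
    (F := fun x u => (Set.Ioc 0 (b*x)).indicator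
        (fun u => x ^ α * g (u/x) * Real.exp (u^2/x - 2*u)) u)
    (f := fun u => A * (u ^ α * Real.exp (-(2 * u)))) bound
    ?meas ?bnd hbound_int ?lim
  · have : ∫ u in Set.Ioi (0:ℝ), A * (u ^ α * Real.exp (-(2*u)))
        = A * ((1/(2:ℝ)) ^ (α+1) * Real.Gamma (α+1)) := by
      rw [MeasureTheory.integral_const_mul, aux_integral α hα 2 two_pos]
    rwa [this] at key
  case meas =>
    filter_upwards with x
    refine (Measurable.indicator ?_ measurableSet_Ioc).aestronglyMeasurable
    exact (measurable_const.mul (hgm.comp (measurable_id.div_const x))).mul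
      ((measurable_id.pow_const 2).div_const x |>.sub
        (measurable_const.mul measurable_id)).exp
  case bnd =>
    filter_upwards [eventually_ge_atTop (1:ℝ)] with x hx
    refine (MeasureTheory.ae_restrict_iff' measurableSet_Ioi).2 (Filter.Eventually.of_forall ?_)
    intro u hu
    have hu0 : 0 < u := hu
    have hx0 : (0:ℝ) < x := lt_of_lt_of_le one_pos hx
    by_cases hmem : u ∈ Set.Ioc 0 (b*x)
    · rw [Set.indicator_of_mem hmem]
      set t : ℝ := u / x with htdef
      have ht0 : 0 < t := div_pos hu0 hx0
      have htb : t ≤ b := by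
        rw [htdef, div_le_iff₀ hx0]
        nlinarith [hmem.2]
      have hexp : Real.exp (u^2/x - 2*u) ≤ Real.exp (-((2-b) * u)) := by
        apply Real.exp_le_exp.2
        have : u^2/x = u * t := by rw [htdef]; ring
        rw [this]
        nlinarith [mul_le_mul_of_nonneg_left htb hu0.le]
      have hxα : (0:ℝ) ≤ x ^ α := (Real.rpow_pos_of_pos hx0 α).le
      have hmain : x ^ α * |g t| ≤ M * u ^ α := by
        have huα : (0:ℝ) ≤ u ^ α := (Real.rpow_pos_of_pos hu0 α).le
        rcases le_or_gt t δ with hc | hc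
        · have h1 := hgsmall t ht0 hc
          have h2 : x ^ α * t ^ α = u ^ α := by
            rw [← Real.mul_rpow hx0.le ht0.le, htdef, mul_div_cancel₀ _ hx0.ne']
          calc x ^ α * |g t| ≤ x ^ α * ((|A|+1) * t ^ α) :=
                mul_le_mul_of_nonneg_left h1 hxα
            _ = (|A|+1) * u ^ α := by rw [← h2]; ring
            _ ≤ M * u ^ α := by
                apply mul_le_mul_of_nonneg_right _ huα
                rw [hMdef]; nlinarith [div_nonneg hK0 hδα.le]
        · have h1 := hK t ⟨ht0.le, htb⟩
          have hxu : x ≤ u / δ := by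
            rw [le_div_iff₀ hδpos]
            have : δ * x < t * x := by nlinarith
            rw [htdef] at this
            rw [div_mul_cancel₀ _ hx0.ne'] at this
            nlinarith
          have h2 : x ^ α ≤ u ^ α / δ ^ α := by
            rw [← Real.div_rpow hu0.le hδpos.le]
            exact Real.rpow_le_rpow hx0.le hxu hα
          calc x ^ α * |g t| ≤ (u ^ α / δ ^ α) * K := by
                apply mul_le_mul h2 h1 (abs_nonneg _)
                positivity
            _ = (K / δ ^ α) * u ^ α := by ring
            _ ≤ M * u ^ α := by
                apply mul_le_mul_of_nonneg_right _ ((Real.rpow_pos_of_pos hu0 α).le)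
                rw [hMdef]; nlinarith [abs_nonneg A]
      have hnorm : ‖x ^ α * g t * Real.exp (u^2/x - 2*u)‖
          = x ^ α * |g t| * Real.exp (u^2/x - 2*u) := by
        rw [Real.norm_eq_abs, abs_mul, abs_mul, Real.abs_exp,
          abs_of_nonneg hxα]
      rw [hnorm, hbound]
      calc x ^ α * |g t| * Real.exp (u^2/x - 2*u)
          ≤ (M * u ^ α) * Real.exp (-((2-b) * u)) :=
            mul_le_mul hmain hexp (Real.exp_pos _).le (by positivity)
        _ = M * (u ^ α * Real.exp (-((2-b) * u))) := by ring
    · rw [Set.indicator_of_notMem hmem]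
      simp only [norm_zero, hbound]
      positivity
  case lim =>
    filter_upwards [MeasureTheory.ae_restrict_mem measurableSet_Ioi] with u hu
    have hu0 : 0 < u := hu
    have hq : Tendsto (fun x : ℝ => u / x) atTop (nhdsWithin 0 (Set.Ioi 0)) := by
      apply tendsto_nhdsWithin_of_tendsto_nhds_of_eventually_within
      · simpa [div_eq_mul_inv] using tendsto_inv_atTop_zero.const_mul u
      · filter_upwards [eventually_gt_atTop (0:ℝ)] with x hx
        exact div_pos hu0 hx
    have hgq : Tendsto (fun x : ℝ => g (u/x) / (u/x) ^ α) atTop (nhds A) := hr.comp hq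
    have hexp : Tendsto (fun x : ℝ => Real.exp (u^2/x - 2*u)) atTop
        (nhds (Real.exp (-(2*u)))) := by
      have h1 : Tendsto (fun x : ℝ => u^2/x - 2*u) atTop (nhds (0 - 2*u)) := by
        apply Tendsto.sub_const
        have := tendsto_inv_atTop_zero.const_mul (u^2); simp only [mul_zero] at this
        exact this.congr fun x => (div_eq_mul_inv _ _).symm
      rw [zero_sub] at h1
      exact (Real.continuous_exp.continuousAt.tendsto).comp h1
    have hmain : Tendsto (fun x : ℝ => u ^ α * (g (u/x) / (u/x) ^ α) * Real.exp (u^2/x - 2*u))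
        atTop (nhds (u ^ α * A * Real.exp (-(2*u)))) :=
      ((tendsto_const_nhds.mul hgq).mul hexp)
    have hfinal : Tendsto (fun x : ℝ => (Set.Ioc 0 (b*x)).indicator
        (fun u => x ^ α * g (u/x) * Real.exp (u^2/x - 2*u)) u) atTop
        (nhds (u ^ α * A * Real.exp (-(2*u)))) := by
      refine Tendsto.congr' ?_ hmain
      filter_upwards [eventually_ge_atTop (u/b), eventually_gt_atTop (0:ℝ)] with x hx1 hx0
      have hmem : u ∈ Set.Ioc 0 (b*x) := by
        constructor
        · exact hu0
        · rw [div_le_iff₀ hb] at hx1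
          linarith [hx1]
      rw [Set.indicator_of_mem hmem]
      have ht0 : 0 < u / x := div_pos hu0 hx0
      have htα : (0:ℝ) < (u/x) ^ α := Real.rpow_pos_of_pos ht0 α
      have hxα : x ^ α = u ^ α / (u/x) ^ α := by
        rw [← Real.div_rpow hu0.le ht0.le]
        congr 1
        field_simp
      rw [hxα]
      field_simp
    have : u ^ α * A * Real.exp (-(2*u)) = A * (u ^ α * Real.exp (-(2*u))) := by ring
    rwa [this] at hfinal

lemma aux_eq (lam0 α ε x : ℝ) (φw : ℝ → ℝ) (hε1 : ε < 1) (hx : 0 < x) :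
    x ^ (1+α) * Real.exp (-x) * ∫ s in ε..1, φw s * s ^ (-lam0) * Real.exp (x * s^2)
    = ∫ u in Set.Ioi (0:ℝ), (Set.Ioc 0 ((1-ε)*x)).indicator
        (fun u => x ^ α * (φw (1 - u/x) * (1 - u/x) ^ (-lam0)) * Real.exp (u^2/x - 2*u)) u := by
  have hx' : x ≠ 0 := hx.ne'
  -- step 1 : substitution s = 1 - t
  have h1 := intervalIntegral.integral_comp_sub_left (a := (0:ℝ)) (b := 1-ε)
    (fun s => φw s * s ^ (-lam0) * Real.exp (x * s^2)) 1
  simp only [sub_sub_cancel, sub_zero] at h1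
  rw [← h1]
  -- step 2 : pull in the constant and simplify the exponential
  rw [← intervalIntegral.integral_const_mul]
  have h2 : ∀ t : ℝ, x ^ (1+α) * Real.exp (-x) *
        (φw (1-t) * (1-t) ^ (-lam0) * Real.exp (x * (1-t)^2))
      = x ^ (1+α) * (φw (1-t) * (1-t) ^ (-lam0)) * Real.exp (x*t^2 - 2*x*t) := by
    intro t
    have hE : Real.exp (x*t^2 - 2*x*t) = Real.exp (-x) * Real.exp (x * (1-t)^2) := by
      rw [← Real.exp_add]; congr 1; ring
    rw [hE]; ring
  simp only [h2]
  -- step 3 : substitution t = u / x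
  have h3 := intervalIntegral.integral_comp_div (a := (0:ℝ)) (b := (1-ε)*x)
    (f := fun t => x ^ (1+α) * (φw (1-t) * (1-t) ^ (-lam0)) * Real.exp (x*t^2 - 2*x*t)) hx'
  rw [zero_div, mul_div_cancel_right₀ _ hx'] at h3
  have h4 : (∫ t in (0:ℝ)..(1-ε), x ^ (1+α) * (φw (1-t) * (1-t) ^ (-lam0)) *
        Real.exp (x*t^2 - 2*x*t))
      = ∫ u in (0:ℝ)..((1-ε)*x), x ^ α * (φw (1 - u/x) * (1 - u/x) ^ (-lam0)) *
        Real.exp (u^2/x - 2*u) := by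
    have h5 : (∫ t in (0:ℝ)..(1-ε), x ^ (1+α) * (φw (1-t) * (1-t) ^ (-lam0)) *
          Real.exp (x*t^2 - 2*x*t))
        = ∫ u in (0:ℝ)..((1-ε)*x), x⁻¹ * (x ^ (1+α) * (φw (1-u/x) * (1-u/x) ^ (-lam0)) *
          Real.exp (x*(u/x)^2 - 2*x*(u/x))) := by
      rw [intervalIntegral.integral_const_mul, h3, smul_eq_mul, inv_mul_cancel_left₀ hx']
    rw [h5]
    apply intervalIntegral.integral_congr
    intro u _
    have e1 : x*(u/x)^2 - 2*x*(u/x) = u^2/x - 2*u := by field_simp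
    have e2 : x⁻¹ * x ^ (1+α) = x ^ α := by
      rw [Real.rpow_add hx, Real.rpow_one]; field_simp
    dsimp only
    rw [e1, ← e2]; ring
  rw [h4]
  -- step 4 : interval integral to indicator integral
  have hc : (0:ℝ) ≤ (1-ε)*x := mul_nonneg (by linarith) hx.le
  rw [intervalIntegral.integral_of_le hc,
    MeasureTheory.setIntegral_indicator measurableSet_Ioc,
    Set.inter_eq_self_of_subset_right Set.Ioc_subset_Ioi_self]

end Aux

/-- Normalization of the leading term of the deconvolution estimator (case `λ = 2`). -/
theorem leading_term_limit (μ lam0 α A C ε : ℝ) (φw : ℝ → ℝ)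
    (hμ : 0 < μ) (hα : 0 ≤ α) (hC : C ≠ 0) (hε0 : 0 < ε) (hε1 : ε < 1)
    (hφc : Continuous φw)
    (hφ : (fun t => φw (1 - t) - A * t ^ α) =o[nhdsWithin 0 (Set.Ioi 0)] fun t => t ^ α) :
    Filter.Tendsto
      (fun h : ℝ =>
        (h ^ (-(2 : ℝ) * (1 + α) - lam0 + 1) * Real.exp (-1 / (μ * h ^ (2 : ℝ))))
          * ((1 / (π * C)) * h ^ (lam0 - 1)
            * ∫ s in ε..1, φw s * s ^ (-lam0) * Real.exp (s ^ (2 : ℝ) / (μ * h ^ (2 : ℝ)))))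
      (nhdsWithin 0 (Set.Ioi 0))
      (nhds ((A / (π * C)) * (μ / 2) ^ (1 + α) * Real.Gamma (α + 1))) := by
  have hb : (0:ℝ) < 1 - ε := by linarith
  have hπC : π * C ≠ 0 := mul_ne_zero Real.pi_ne_zero hC
  set g : ℝ → ℝ := fun t => φw (1-t) * Real.exp (Real.log (1-t) * (-lam0)) with hgdef
  -- little-o property for g
  have h1 : Tendsto (fun t : ℝ => Real.exp (Real.log (1-t) * (-lam0)))
      (nhdsWithin 0 (Set.Ioi 0)) (nhds 1) := by
    have hc : ContinuousAt (fun t : ℝ => Real.exp (Real.log (1-t) * (-lam0))) 0 := by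
      apply ContinuousAt.rexp
      apply ContinuousAt.mul _ continuousAt_const
      exact (Real.continuousAt_log (by norm_num)).comp
        ((continuous_const.sub continuous_id).continuousAt)
    have h1' := hc.tendsto
    simp only [sub_zero, Real.log_one, zero_mul, Real.exp_zero] at h1'
    exact h1'.mono_left nhdsWithin_le_nhds
  have hg : (fun t => g t - A * t ^ α) =o[nhdsWithin 0 (Set.Ioi 0)] fun t => t ^ α := by
    have h2 : (fun t : ℝ => Real.exp (Real.log (1-t) * (-lam0))) =O[nhdsWithin 0 (Set.Ioi 0)]
        (fun _ => (1:ℝ)) := h1.isBigO_one ℝ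
    have h3 := hφ.mul_isBigO h2
    have h4 : Tendsto (fun t : ℝ => Real.exp (Real.log (1-t) * (-lam0)) - 1)
        (nhdsWithin 0 (Set.Ioi 0)) (nhds 0) := by simpa using h1.sub_const 1
    have h5 : (fun t : ℝ => Real.exp (Real.log (1-t) * (-lam0)) - 1)
        =o[nhdsWithin 0 (Set.Ioi 0)] (fun _ => (1:ℝ)) :=
      (Asymptotics.isLittleO_one_iff ℝ).mpr h4
    have h6 : (fun t : ℝ => A * t ^ α) =O[nhdsWithin 0 (Set.Ioi 0)]
        (fun t => t ^ α) := (Asymptotics.isBigO_refl _ _).const_mul_left A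
    have h7 := h6.mul_isLittleO h5
    have h8 := h3.add h7
    simp only [mul_one] at h8
    have heq : (fun t => g t - A * t ^ α)
        = fun t => (φw (1-t) - A * t ^ α) * Real.exp (Real.log (1-t) * (-lam0))
          + A * t ^ α * (Real.exp (Real.log (1-t) * (-lam0)) - 1) := by
      funext t; simp only [hgdef]; ring
    rw [heq]
    exact h8
  have hgm : Measurable g :=
    ((hφc.comp (continuous_const.sub continuous_id)).measurable).mul
      (((Real.measurable_log.comp (measurable_const.sub measurable_id)).mul_const
        (-lam0)).exp)
  have hgc : ContinuousOn g (Set.Icc 0 (1-ε)) := by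
    apply ContinuousOn.mul
    · exact (hφc.comp (continuous_const.sub continuous_id)).continuousOn
    · apply Real.continuous_exp.comp_continuousOn
      apply ContinuousOn.mul _ continuousOn_const
      apply ContinuousOn.log (continuous_const.sub continuous_id).continuousOn
      intro t ht
      have := ht.2
      intro hcontra
      have h0 : (1:ℝ) - t = 0 := hcontra
      linarith [ht.2]
  have hcore := aux_core α A (1-ε) hα hb (by linarith) g hgm hgc hg
  -- composition with x = (μ h²)⁻¹
  have hxt : Tendsto (fun h : ℝ => (μ * h^2)⁻¹) (nhdsWithin 0 (Set.Ioi 0)) atTop := by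
    apply tendsto_inv_nhdsGT_zero.comp
    apply tendsto_nhdsWithin_of_tendsto_nhds_of_eventually_within
    · have hcont : Tendsto (fun h : ℝ => μ * h^2) (nhds 0) (nhds (μ * 0^2)) :=
        (continuous_const.mul (continuous_pow 2)).tendsto 0
      simpa using hcont.mono_left nhdsWithin_le_nhds
    · filter_upwards [self_mem_nhdsWithin] with h hh
      exact mul_pos hμ (pow_pos hh 2)
  have hcomp := (hcore.comp hxt).const_mul (μ ^ (1+α) * (π*C)⁻¹)
  have hval : (A / (π * C)) * (μ / 2) ^ (1 + α) * Real.Gamma (α + 1)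
      = μ ^ (1+α) * (π*C)⁻¹ * (A * ((1/(2:ℝ)) ^ (α+1) * Real.Gamma (α+1))) := by
    have e1 : (μ/2 : ℝ) ^ (1+α) = μ ^ (1+α) * (1/(2:ℝ)) ^ (1+α) := by
      rw [show (μ/2:ℝ) = μ * (1/2) by ring, Real.mul_rpow hμ.le (by norm_num)]
    have e2 : ((1:ℝ)/2) ^ (α+1) = ((1:ℝ)/2) ^ (1+α) := by rw [add_comm]
    rw [e1, e2]
    field_simp
  rw [hval]
  refine Tendsto.congr' ?_ hcomp
  -- eventual equality of the functions
  filter_upwards [self_mem_nhdsWithin] with h hh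
  simp only [Function.comp_apply]
  have hh0 : (0:ℝ) < h := hh
  set x : ℝ := (μ * h^2)⁻¹ with hxdef
  have hx0 : 0 < x := inv_pos.2 (mul_pos hμ (pow_pos hh0 2))
  have hh2 : h ^ (2:ℝ) = h^2 := by
    rw [show (2:ℝ) = ((2:ℕ):ℝ) by norm_num, Real.rpow_natCast]
  have hs2 : ∀ s : ℝ, s ^ (2:ℝ) = s^2 := fun s => by
    rw [show (2:ℝ) = ((2:ℕ):ℝ) by norm_num, Real.rpow_natCast]
  have hI : (∫ s in ε..1, φw s * s ^ (-lam0) * Real.exp (s ^ (2:ℝ) / (μ * h ^ (2:ℝ))))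
      = ∫ s in ε..1, φw s * s ^ (-lam0) * Real.exp (x * s^2) := by
    simp only [hs2, hh2, div_eq_inv_mul, hxdef]
  have hexp : Real.exp (-1 / (μ * h ^ (2:ℝ))) = Real.exp (-x) := by
    rw [hh2]; congr 1; rw [neg_div, one_div]
  have hpow : h ^ (-(2:ℝ) * (1+α) - lam0 + 1) * h ^ (lam0 - 1)
      = μ ^ (1+α) * x ^ (1+α) := by
    have e1 : h ^ (-(2:ℝ) * (1+α) - lam0 + 1) * h ^ (lam0 - 1)
        = h ^ ((2:ℝ) * (-(1+α))) := by
      rw [← Real.rpow_add hh0]; congr 1; ring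
    rw [e1, Real.rpow_mul hh0.le, hh2, Real.rpow_neg (by positivity),
      ← Real.inv_rpow (by positivity), ← Real.mul_rpow hμ.le hx0.le]
    congr 1
    rw [hxdef]
    field_simp
  have hind : (Set.Ioc 0 ((1-ε)*x)).indicator
        (fun u => x ^ α * (φw (1 - u/x) * (1 - u/x) ^ (-lam0)) * Real.exp (u^2/x - 2*u))
      = (Set.Ioc 0 ((1-ε)*x)).indicator
        (fun u => x ^ α * g (u/x) * Real.exp (u^2/x - 2*u)) := by
    apply Set.indicator_congr
    intro u hu
    have hul : u ≤ (1-ε)*x := hu.2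
    have hpos : 0 < 1 - u/x := by
      have : u/x ≤ 1-ε := by
        rw [div_le_iff₀ hx0]; nlinarith
      linarith
    simp only [hgdef]
    rw [Real.rpow_def_of_pos hpos]
  rw [hI, hexp]
  symm
  calc h ^ (-(2:ℝ) * (1+α) - lam0 + 1) * Real.exp (-x) *
        ((1 / (π*C)) * h ^ (lam0-1) * ∫ s in ε..1, φw s * s ^ (-lam0) * Real.exp (x * s^2))
      = (h ^ (-(2:ℝ) * (1+α) - lam0 + 1) * h ^ (lam0-1)) * (π*C)⁻¹ *
        (Real.exp (-x) * ∫ s in ε..1, φw s * s ^ (-lam0) * Real.exp (x * s^2)) := by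
        rw [one_div]; ring
    _ = μ ^ (1+α) * (π*C)⁻¹ *
        (x ^ (1+α) * Real.exp (-x) * ∫ s in ε..1, φw s * s ^ (-lam0) * Real.exp (x * s^2)) := by
        rw [hpow]; ring
    _ = μ ^ (1+α) * (π*C)⁻¹ *
        ∫ u in Set.Ioi (0:ℝ), (Set.Ioc 0 ((1-ε)*x)).indicator
          (fun u => x ^ α * (φw (1 - u/x) * (1 - u/x) ^ (-lam0)) *
            Real.exp (u^2/x - 2*u)) u := by
        rw [aux_eq lam0 α ε x φw hε1 hx0]
    _ = μ ^ (1+α) * (π*C)⁻¹ *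
        ∫ u in Set.Ioi (0:ℝ), (Set.Ioc 0 ((1-ε)*x)).indicator
          (fun u => x ^ α * g (u/x) * Real.exp (u^2/x - 2*u)) u := by
        rw [hind]
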